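/- arXiv:2005.02287 — 2 statements merged into one kernel-verified Lean document; each statement's English description precedes it below -/
import Mathlib

section
/- For every twice continuously differentiable function u on [0,1] × [0,Θ], the interpolation error in the weighted H¹ norm satisfies ‖u − Πu‖²_{L²_r(Q)} + ‖∂_r (u − Πu)‖²_{L²_r(Q)} + ‖∂_θ (u − Πu)‖²_{L²_{1/r}(Q)} ≤ h² (h² + 4) ( ‖∂_{rθ} u‖²_{L²_r(Q)} + ‖∂_{θθ} u‖²_{L²_{1/r}(Q)} ), where ∂_θ (u − Πu) is defined for θ outside the partition nodes and the inequality holds in [0,∞]. -/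
open MeasureTheory Set Real

/-- Squared weighted norm `‖v‖²_{L²_r(Q)} = ∫₀¹ ∫₀^Θ v(r,θ)² r dθ dr`, valued in `[0,∞]`. -/
noncomputable def wL2r (Θ : ℝ) (v : ℝ × ℝ → ℝ) : ENNReal :=
  ∫⁻ r in Ioo (0:ℝ) 1, ∫⁻ θ in Ioo (0:ℝ) Θ, ENNReal.ofReal ((v (r, θ)) ^ 2 * r)

/-- Squared weighted norm `‖v‖²_{L²_{1/r}(Q)} = ∫₀¹ ∫₀^Θ v(r,θ)² (1/r) dθ dr`. -/
noncomputable def wL2invr (Θ : ℝ) (v : ℝ × ℝ → ℝ) : ENNReal :=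
  ∫⁻ r in Ioo (0:ℝ) 1, ∫⁻ θ in Ioo (0:ℝ) Θ, ENNReal.ofReal ((v (r, θ)) ^ 2 / r)

/-- Partial derivative with respect to the first (radial) variable. -/
noncomputable def pd1 (u : ℝ × ℝ → ℝ) (p : ℝ × ℝ) : ℝ := deriv (fun s => u (s, p.2)) p.1

/-- Partial derivative with respect to the second (angular) variable. -/
noncomputable def pd2 (u : ℝ × ℝ → ℝ) (p : ℝ × ℝ) : ℝ := deriv (fun t => u (p.1, t)) p.2

/-- The interpolant `(Πu)(r,θ) = Σ_i u(r, θ_i) e_i(θ)`. -/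
noncomputable def interp (N : ℕ) (t : ℕ → ℝ) (e : ℕ → ℝ → ℝ) (u : ℝ × ℝ → ℝ) :
    ℝ × ℝ → ℝ :=
  fun p => ∑ i ∈ Finset.range N, u (p.1, t i) * e i p.2

namespace Stmt11Aux

/-- Cauchy–Schwarz for interval integrals (crude form). -/
lemma cs_key {a b : ℝ} (hab : a ≤ b) (ψ : ℝ → ℝ) (hψ : ContinuousOn ψ (Icc a b)) :
    (∫ s in a..b, ψ s) ^ 2 ≤ (b - a) * ∫ s in a..b, ψ s ^ 2 := by
  rcases eq_or_lt_of_le hab with rfl | hab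
  · simp
  have hint : IntervalIntegrable ψ volume a b :=
    ContinuousOn.intervalIntegrable (by rwa [uIcc_of_le hab.le])
  have hint2 : IntervalIntegrable (fun s => ψ s ^ 2) volume a b :=
    ContinuousOn.intervalIntegrable (by rw [uIcc_of_le hab.le]; exact hψ.pow 2)
  set I := ∫ s in a..b, ψ s with hI
  set m := I / (b - a) with hm
  have h0 : (0:ℝ) ≤ ∫ s in a..b, (ψ s - m) ^ 2 :=
    intervalIntegral.integral_nonneg hab.le (fun s _ => sq_nonneg _)
  have hexp : ∫ s in a..b, (ψ s - m) ^ 2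
      = (∫ s in a..b, ψ s ^ 2) - (2 * m) * I + (b - a) * m ^ 2 := by
    have e1 : ∀ s, (ψ s - m) ^ 2 = ψ s ^ 2 - (2 * m) * ψ s + m ^ 2 := fun s => by ring
    simp_rw [e1]
    rw [intervalIntegral.integral_add (hint2.sub (hint.const_mul (2*m)))
        intervalIntegrable_const,
      intervalIntegral.integral_sub hint2 (hint.const_mul (2*m)),
      intervalIntegral.integral_const_mul, intervalIntegral.integral_const]
    simp only [smul_eq_mul, ← hI]
  have hb : 0 < b - a := sub_pos.2 hab
  have hmb : m * (b - a) = I := by rw [hm, div_mul_cancel₀ _ hb.ne']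
  nlinarith [h0, hexp, sq_nonneg m]

/-- integrate a pointwise bound on a square -/
lemma int_sq_le {a b C : ℝ} (hab : a ≤ b) (φ : ℝ → ℝ) (hφ : ContinuousOn φ (Icc a b))
    (hC : ∀ x ∈ Icc a b, φ x ^ 2 ≤ C) :
    ∫ s in a..b, φ s ^ 2 ≤ (b - a) * C := by
  have h1 : ∫ s in a..b, φ s ^ 2 ≤ ∫ _s in a..b, C := by
    apply intervalIntegral.integral_mono_on hab
      (ContinuousOn.intervalIntegrable (by rw [uIcc_of_le hab]; exact hφ.pow 2))
      intervalIntegrable_const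
    exact fun x hx => hC x hx
  simpa [smul_eq_mul] using h1

/-- Poincaré from a vanishing left endpoint. -/
lemma key1 {a b : ℝ} (hab : a ≤ b) (φ ψ : ℝ → ℝ)
    (hφc : ContinuousOn φ (Icc a b)) (hφa : φ a = 0)
    (hψc : ContinuousOn ψ (Icc a b))
    (hd : ∀ x ∈ Ioo a b, HasDerivAt φ (ψ x) x) :
    ∀ x ∈ Icc a b, φ x ^ 2 ≤ (b - a) * ∫ s in a..b, ψ s ^ 2 := by
  intro x hx
  have hax : a ≤ x := hx.1
  have hxb : x ≤ b := hx.2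
  have hFTC : ∫ s in a..x, ψ s = φ x - φ a := by
    apply intervalIntegral.integral_eq_sub_of_hasDerivAt_of_le hax
      (hφc.mono (Icc_subset_Icc le_rfl hxb))
      (fun y hy => hd y ⟨hy.1, lt_of_lt_of_le hy.2 hxb⟩)
    exact ContinuousOn.intervalIntegrable
      (by rw [uIcc_of_le hax]; exact hψc.mono (Icc_subset_Icc le_rfl hxb))
  have hCS := cs_key hax ψ (hψc.mono (Icc_subset_Icc le_rfl hxb))
  have hmono : ∫ s in a..x, ψ s ^ 2 ≤ ∫ s in a..b, ψ s ^ 2 := by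
    apply intervalIntegral.integral_mono_interval le_rfl hax hxb
      (Filter.Eventually.of_forall (fun s => sq_nonneg _))
    exact ContinuousOn.intervalIntegrable (by rw [uIcc_of_le hab]; exact hψc.pow 2)
  have hnn : (0:ℝ) ≤ ∫ s in a..x, ψ s ^ 2 :=
    intervalIntegral.integral_nonneg hax (fun s _ => sq_nonneg _)
  have hφx : φ x = ∫ s in a..x, ψ s := by rw [hFTC, hφa, sub_zero]
  rw [hφx]
  calc (∫ s in a..x, ψ s) ^ 2 ≤ (x - a) * ∫ s in a..x, ψ s ^ 2 := hCS
    _ ≤ (b - a) * ∫ s in a..b, ψ s ^ 2 := by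
        apply mul_le_mul (by linarith) hmono hnn (by linarith)

/-- projection bound -/
lemma key2 {a b : ℝ} (hab : a < b) (ψ : ℝ → ℝ) (hψc : ContinuousOn ψ (Icc a b)) :
    ∫ s in a..b, (ψ s - (∫ s in a..b, ψ s) / (b - a)) ^ 2 ≤ ∫ s in a..b, ψ s ^ 2 := by
  have hint : IntervalIntegrable ψ volume a b :=
    ContinuousOn.intervalIntegrable (by rwa [uIcc_of_le hab.le])
  have hint2 : IntervalIntegrable (fun s => ψ s ^ 2) volume a b :=
    ContinuousOn.intervalIntegrable (by rw [uIcc_of_le hab.le]; exact hψc.pow 2)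
  set I := ∫ s in a..b, ψ s with hI
  set m := I / (b - a) with hm
  have hexp : ∫ s in a..b, (ψ s - m) ^ 2
      = (∫ s in a..b, ψ s ^ 2) - (2 * m) * I + (b - a) * m ^ 2 := by
    have e1 : ∀ s, (ψ s - m) ^ 2 = ψ s ^ 2 - (2 * m) * ψ s + m ^ 2 := fun s => by ring
    simp_rw [e1]
    rw [intervalIntegral.integral_add (hint2.sub (hint.const_mul (2*m)))
        intervalIntegrable_const,
      intervalIntegral.integral_sub hint2 (hint.const_mul (2*m)),
      intervalIntegral.integral_const_mul, intervalIntegral.integral_const]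
    simp only [smul_eq_mul, ← hI]
  have hb : 0 < b - a := sub_pos.2 hab
  have hmb : m * (b - a) = I := by rw [hm, div_mul_cancel₀ _ hb.ne']
  have h2 : 2 * m * I = 2 * m ^ 2 * (b - a) := by rw [← hmb]; ring
  nlinarith [hexp, h2, mul_nonneg hb.le (sq_nonneg m)]

/-- mean-oscillation bound -/
lemma key3 {a b : ℝ} (hab : a < b) (ψ χ : ℝ → ℝ)
    (hψc : ContinuousOn ψ (Icc a b)) (hχc : ContinuousOn χ (Icc a b))
    (hd : ∀ x ∈ Ioo a b, HasDerivAt ψ (χ x) x) :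
    ∀ x ∈ Icc a b, (ψ x - (∫ s in a..b, ψ s) / (b - a)) ^ 2
      ≤ (b - a) * ∫ s in a..b, χ s ^ 2 := by
  intro x hx
  set B := ∫ s in a..b, |χ s| with hB
  have hint : IntervalIntegrable ψ volume a b :=
    ContinuousOn.intervalIntegrable (by rwa [uIcc_of_le hab.le])
  have hχaint : IntervalIntegrable (fun s => |χ s|) volume a b :=
    ContinuousOn.intervalIntegrable (by rw [uIcc_of_le hab.le]; exact hχc.abs)
  have aux : ∀ s y, a ≤ s → s ≤ y → y ≤ b → |ψ y - ψ s| ≤ B := by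
    intro s y has hsy hyb
    have hFTC : ∫ z in s..y, χ z = ψ y - ψ s := by
      apply intervalIntegral.integral_eq_sub_of_hasDerivAt_of_le hsy
        (hψc.mono (Icc_subset_Icc has hyb))
        (fun z hz => hd z ⟨lt_of_le_of_lt has hz.1, lt_of_lt_of_le hz.2 hyb⟩)
      exact ContinuousOn.intervalIntegrable
        (by rw [uIcc_of_le hsy]; exact hχc.mono (Icc_subset_Icc has hyb))
    rw [← hFTC]
    calc |∫ z in s..y, χ z| ≤ ∫ z in s..y, |χ z| :=
          intervalIntegral.abs_integral_le_integral_abs hsy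
      _ ≤ B := by
          apply intervalIntegral.integral_mono_interval has hsy hyb
            (Filter.Eventually.of_forall (fun z => abs_nonneg _)) hχaint
  have osc : ∀ s ∈ Icc a b, |ψ x - ψ s| ≤ B := by
    intro s hs
    rcases le_total s x with hsx | hxs
    · exact aux s x hs.1 hsx hx.2
    · rw [abs_sub_comm]; exact aux x s hx.1 hxs hs.2
  set m := (∫ s in a..b, ψ s) / (b - a) with hm
  have hstep2 : |ψ x - m| ≤ B := by
    have hsub : ∫ s in a..b, (ψ x - ψ s) = (b - a) * ψ x - ∫ s in a..b, ψ s := by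
      rw [intervalIntegral.integral_sub intervalIntegrable_const hint,
        intervalIntegral.integral_const, smul_eq_mul]
    have hbd : |∫ s in a..b, (ψ x - ψ s)| ≤ B * |b - a| := by
      have h' : ‖∫ s in a..b, (ψ x - ψ s)‖ ≤ B * |b - a| := by
        apply intervalIntegral.norm_integral_le_of_norm_le_const
        intro s hs
        have hs' : s ∈ Icc a b := by
          rw [uIoc_of_le hab.le] at hs; exact ⟨hs.1.le, hs.2⟩
        simpa using osc s hs'
      simpa [Real.norm_eq_abs] using h'
    have hba : |b - a| = b - a := abs_of_pos (sub_pos.2 hab)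
    have hquot : ψ x - m = (∫ s in a..b, (ψ x - ψ s)) / (b - a) := by
      have hne : b - a ≠ 0 := sub_ne_zero.2 hab.ne'
      rw [hsub, hm, eq_div_iff hne, sub_mul, div_mul_cancel₀ _ hne]
      ring
    rw [hquot, abs_div, hba]
    rw [div_le_iff₀ (sub_pos.2 hab)]
    calc |∫ s in a..b, (ψ x - ψ s)| ≤ B * |b - a| := hbd
      _ = B * (b - a) := by rw [hba]
  have hstep3 : B ^ 2 ≤ (b - a) * ∫ s in a..b, χ s ^ 2 := by
    have := cs_key hab.le (fun s => |χ s|) hχc.abs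
    simpa [sq_abs] using this
  have hBnn : 0 ≤ B :=
    intervalIntegral.integral_nonneg hab.le (fun s _ => abs_nonneg _)
  nlinarith [hstep2, hstep3, abs_nonneg (ψ x - m), sq_abs (ψ x - m)]

/-- convert a weighted lintegral of a square over `Ioo a b` to an interval integral -/
lemma lint_ofReal_sq {a b : ℝ} (hab : a ≤ b) (w : ℝ) (hw : 0 ≤ w) (v φ : ℝ → ℝ)
    (hv : ∀ x ∈ Ioo a b, v x = φ x) (hφ : ContinuousOn φ (Icc a b)) :
    ∫⁻ x in Ioo a b, ENNReal.ofReal (v x ^ 2 * w)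
      = ENNReal.ofReal (w * ∫ s in a..b, φ s ^ 2) := by
  have h1 : ∫⁻ x in Ioo a b, ENNReal.ofReal (v x ^ 2 * w)
      = ∫⁻ x in Ioo a b, ENNReal.ofReal (φ x ^ 2 * w) := by
    apply setLIntegral_congr_fun measurableSet_Ioo
    exact (fun x hx => by simp only [hv x hx])
  have hint : IntegrableOn (fun x => φ x ^ 2 * w) (Ioo a b) :=
    (((hφ.pow 2).mul continuousOn_const).integrableOn_compact isCompact_Icc).mono_set
      Ioo_subset_Icc_self
  have h2 : ∫⁻ x in Ioo a b, ENNReal.ofReal (φ x ^ 2 * w)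
      = ENNReal.ofReal (∫ x in Ioo a b, φ x ^ 2 * w) := by
    rw [ofReal_integral_eq_lintegral_ofReal hint
      (Filter.Eventually.of_forall (fun x => mul_nonneg (sq_nonneg _) hw))]
  have h3 : ∫ x in Ioo a b, φ x ^ 2 * w = w * ∫ s in a..b, φ s ^ 2 := by
    rw [integral_mul_const, intervalIntegral.integral_of_le hab,
      ← integral_Ioc_eq_integral_Ioo, mul_comm]
  rw [h1, h2, h3]

lemma tmono {N : ℕ} {t : ℕ → ℝ} (htmono : ∀ j, j + 1 < N → t j < t (j + 1)) :
    ∀ i j, i ≤ j → j < N → t i ≤ t j := by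
  intro i j hij hjN
  induction j with
  | zero => simp_all
  | succ k ih =>
    rcases Nat.eq_or_lt_of_le hij with rfl | hlt
    · exact le_rfl
    · exact le_trans (ih (Nat.lt_succ_iff.1 hlt) (Nat.lt_of_succ_lt hjN))
        (htmono k hjN).le

lemma split_le {N : ℕ} {t : ℕ → ℝ} {Θ : ℝ} (hN : 2 ≤ N) (ht0 : t 0 = 0)
    (htN : t (N - 1) = Θ)
    (htmono : ∀ j, j + 1 < N → t j < t (j + 1))
    (f g : ℝ → ENNReal) (C : ENNReal)
    (hj : ∀ j, j + 1 < N → (∫⁻ x in Ioo (t j) (t (j + 1)), f x)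
        ≤ C * ∫⁻ x in Ioo (t j) (t (j + 1)), g x) :
    (∫⁻ x in Ioo (0:ℝ) Θ, f x) ≤ C * ∫⁻ x in Ioo (0:ℝ) Θ, g x := by
  classical
  set U : Set ℝ := ⋃ j ∈ Finset.range (N - 1), Ioo (t j) (t (j + 1)) with hU
  set T : Set ℝ := ⋃ k ∈ Finset.range N, {t k} with hT
  have hmem : ∀ j, j ∈ Finset.range (N - 1) ↔ j + 1 < N := by
    intro j; rw [Finset.mem_range]; omega
  have hcover : Ioo (0:ℝ) Θ ⊆ U ∪ T := by
    intro x hx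
    by_cases hxT : x ∈ T
    · exact Or.inr hxT
    refine Or.inl ?_
    have hxnode : ∀ k, k < N → x ≠ t k := by
      intro k hk hxk
      exact hxT (by simp only [hT, mem_iUnion, mem_singleton_iff]
                    exact ⟨k, Finset.mem_range.2 hk, hxk⟩)
    set F := (Finset.range N).filter (fun k => t k < x) with hF
    have h0F : 0 ∈ F := by
      refine Finset.mem_filter.2 ⟨Finset.mem_range.2 (by omega), ?_⟩
      rw [ht0]; exact hx.1
    have hFne : F.Nonempty := ⟨0, h0F⟩
    set j := F.max' hFne with hjdef
    have hjF : j ∈ F := F.max'_mem hFne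
    have hjN : j < N := Finset.mem_range.1 (Finset.mem_filter.1 hjF).1
    have htjx : t j < x := (Finset.mem_filter.1 hjF).2
    have hj1 : j + 1 < N := by
      rcases Nat.lt_or_ge (j+1) N with h' | h'
      · exact h'
      · exfalso
        have : j = N - 1 := by omega
        rw [this, htN] at htjx
        exact absurd hx.2 (not_lt.2 htjx.le)
    have hxle : x ≤ t (j + 1) := by
      by_contra hlt
      push_neg at hlt
      have hmemF : j + 1 ∈ F := Finset.mem_filter.2 ⟨Finset.mem_range.2 hj1, hlt⟩
      have := F.le_max' (j+1) hmemF
      omega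
    have hxlt : x < t (j + 1) := lt_of_le_of_ne hxle (hxnode (j+1) hj1)
    exact mem_iUnion₂.2 ⟨j, (hmem j).2 hj1, htjx, hxlt⟩
  have hTnull : volume T = 0 := by
    apply measure_biUnion_null_iff (Finset.range N).countable_toSet |>.2
    intro k _; exact measure_singleton _
  have hdisj : (↑(Finset.range (N - 1)) : Set ℕ).PairwiseDisjoint
      (fun j => Ioo (t j) (t (j + 1))) := by
    have key : ∀ i j, i < j → j + 1 < N →
        Disjoint (Ioo (t i) (t (i+1))) (Ioo (t j) (t (j+1))) := by
      intro i j hij hjN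
      apply Set.disjoint_left.2
      intro x hxi hxj
      have : t (i+1) ≤ t j := tmono htmono (i+1) j hij (by omega)
      exact absurd (hxi.2.trans_le this) (not_lt.2 hxj.1.le)
    intro i hi j hj hij
    simp only [Finset.coe_range, mem_Iio] at hi hj
    rcases lt_or_gt_of_ne hij with h' | h'
    · exact key i j h' (by omega)
    · exact (key j i h' (by omega)).symm
  have hUsub : U ⊆ Ioo (0:ℝ) Θ := by
    intro x hx
    rcases mem_iUnion₂.1 hx with ⟨j, hjr, hxj⟩
    have hj1 : j + 1 < N := (hmem j).1 hjr
    constructor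
    · calc (0:ℝ) = t 0 := ht0.symm
        _ ≤ t j := tmono htmono 0 j (Nat.zero_le _) (by omega)
        _ < x := hxj.1
    · calc x < t (j+1) := hxj.2
        _ ≤ t (N-1) := tmono htmono (j+1) (N-1) (by omega) (by omega)
        _ = Θ := htN
  calc ∫⁻ x in Ioo (0:ℝ) Θ, f x ≤ ∫⁻ x in U ∪ T, f x := lintegral_mono_set hcover
    _ ≤ (∫⁻ x in U, f x) + ∫⁻ x in T, f x := by
        rw [← lintegral_add_measure]
        exact lintegral_mono' (Measure.restrict_union_le _ _) le_rfl
    _ = ∫⁻ x in U, f x := by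
        rw [setLIntegral_measure_zero _ _ hTnull, add_zero]
    _ = ∑ j ∈ Finset.range (N - 1), ∫⁻ x in Ioo (t j) (t (j + 1)), f x :=
        lintegral_biUnion_finset hdisj (fun j _ => measurableSet_Ioo) f
    _ ≤ ∑ j ∈ Finset.range (N - 1), C * ∫⁻ x in Ioo (t j) (t (j + 1)), g x :=
        Finset.sum_le_sum (fun j hjr => hj j ((hmem j).1 hjr))
    _ = C * ∑ j ∈ Finset.range (N - 1), ∫⁻ x in Ioo (t j) (t (j + 1)), g x := by
        rw [Finset.mul_sum]
    _ = C * ∫⁻ x in U, g x := by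
        rw [lintegral_biUnion_finset hdisj (fun j _ => measurableSet_Ioo) g]
    _ ≤ C * ∫⁻ x in Ioo (0:ℝ) Θ, g x :=
        mul_le_mul_right (lintegral_mono_set hUsub) C

lemma sum_node_eval {N : ℕ} {t : ℕ → ℝ} {e : ℕ → ℝ → ℝ}
    (hnode : ∀ i < N, ∀ j < N, e i (t j) = if i = j then 1 else 0)
    (q : ℕ → ℝ) (k : ℕ) (hk : k < N) :
    ∑ i ∈ Finset.range N, q i * e i (t k) = q k := by
  rw [Finset.sum_congr rfl (fun i hi => by
    rw [hnode i (Finset.mem_range.1 hi) k hk, mul_ite, mul_one, mul_zero])]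
  rw [Finset.sum_ite_eq' (Finset.range N) k q]
  simp [hk]

lemma sum_affine {N : ℕ} {t : ℕ → ℝ} {e : ℕ → ℝ → ℝ}
    (hnode : ∀ i < N, ∀ j < N, e i (t j) = if i = j then 1 else 0)
    (hlin : ∀ i < N, ∀ j, j + 1 < N → ∀ x ∈ Icc (t j) (t (j + 1)),
      e i x = e i (t j) + (e i (t (j + 1)) - e i (t j)) * (x - t j) / (t (j + 1) - t j))
    (j : ℕ) (hj : j + 1 < N) (q : ℕ → ℝ) :
    ∀ x ∈ Icc (t j) (t (j + 1)),
      ∑ i ∈ Finset.range N, q i * e i x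
        = q j + (q (j + 1) - q j) * (x - t j) / (t (j + 1) - t j) := by
  intro x hx
  have h1 : ∀ i ∈ Finset.range N, q i * e i x
      = q i * e i (t j)
        + (q i * e i (t (j + 1)) - q i * e i (t j)) * (x - t j) / (t (j + 1) - t j) := by
    intro i hi
    rw [hlin i (Finset.mem_range.1 hi) j hj x hx]; ring
  rw [Finset.sum_congr rfl h1, Finset.sum_add_distrib]
  have h2 : ∑ i ∈ Finset.range N,
        (q i * e i (t (j + 1)) - q i * e i (t j)) * (x - t j) / (t (j + 1) - t j)
      = ((∑ i ∈ Finset.range N, q i * e i (t (j + 1)))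
          - ∑ i ∈ Finset.range N, q i * e i (t j)) * (x - t j) / (t (j + 1) - t j) := by
    rw [← Finset.sum_div, ← Finset.sum_mul, Finset.sum_sub_distrib]
  rw [h2, sum_node_eval hnode q j (by omega), sum_node_eval hnode q (j + 1) hj]

lemma sum_affine_deriv {N : ℕ} {t : ℕ → ℝ} {e : ℕ → ℝ → ℝ}
    (hnode : ∀ i < N, ∀ j < N, e i (t j) = if i = j then 1 else 0)
    (hlin : ∀ i < N, ∀ j, j + 1 < N → ∀ x ∈ Icc (t j) (t (j + 1)),
      e i x = e i (t j) + (e i (t (j + 1)) - e i (t j)) * (x - t j) / (t (j + 1) - t j))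
    (j : ℕ) (hj : j + 1 < N) (q : ℕ → ℝ) :
    ∀ x ∈ Ioo (t j) (t (j + 1)),
      ∑ i ∈ Finset.range N, q i * deriv (e i) x
        = (q (j + 1) - q j) / (t (j + 1) - t j) := by
  intro x hx
  have hderiv : ∀ i, i < N → deriv (e i) x
      = (e i (t (j + 1)) - e i (t j)) / (t (j + 1) - t j) := by
    intro i hi
    have hev : e i =ᶠ[nhds x] (fun y =>
        e i (t j) + (e i (t (j + 1)) - e i (t j)) * (y - t j) / (t (j + 1) - t j)) := by
      filter_upwards [Ioo_mem_nhds hx.1 hx.2] with y hy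
      exact hlin i hi j hj y (Ioo_subset_Icc_self hy)
    have hda : HasDerivAt (fun y =>
        e i (t j) + (e i (t (j + 1)) - e i (t j)) * (y - t j) / (t (j + 1) - t j))
        ((e i (t (j + 1)) - e i (t j)) / (t (j + 1) - t j)) x := by
      have := ((((hasDerivAt_id x).sub_const (t j)).const_mul
        (e i (t (j + 1)) - e i (t j))).div_const (t (j + 1) - t j)).const_add (e i (t j))
      simpa using this
    rw [hev.deriv_eq, hda.deriv]
  have h1 : ∀ i ∈ Finset.range N, q i * deriv (e i) x
      = (q i * e i (t (j + 1)) - q i * e i (t j)) / (t (j + 1) - t j) := by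
    intro i hi
    rw [hderiv i (Finset.mem_range.1 hi)]; ring
  rw [Finset.sum_congr rfl h1, ← Finset.sum_div, Finset.sum_sub_distrib,
    sum_node_eval hnode q j (by omega), sum_node_eval hnode q (j + 1) hj]

/-- derivative of the local affine interpolant -/
lemma affine_hasDerivAt (c A a d x : ℝ) :
    HasDerivAt (fun y => c + A * (y - a) / d) (A / d) x := by
  have := ((((hasDerivAt_id x).sub_const a).const_mul A).div_const d).const_add c
  simpa using this

/-- 1D package for `C¹` functions on `[0,Θ]` -/
lemma oneD_pack {Θ : ℝ} (hΘ : 0 < Θ) {g : ℝ → ℝ} (hg : ContDiffOn ℝ 1 g (Icc 0 Θ)) :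
    ContinuousOn (derivWithin g (Icc 0 Θ)) (Icc 0 Θ) ∧
    ∀ x ∈ Ioo 0 Θ, HasDerivAt g (derivWithin g (Icc 0 Θ) x) x := by
  constructor
  · exact hg.continuousOn_derivWithin (uniqueDiffOn_Icc hΘ) le_rfl
  · intro x hx
    have hd : DifferentiableWithinAt ℝ g (Icc 0 Θ) x :=
      (hg.differentiableOn one_ne_zero) x (Ioo_subset_Icc_self hx)
    exact hd.hasFDerivWithinAt.hasDerivWithinAt.hasDerivAt (Icc_mem_nhds hx.1 hx.2)

end Stmt11Aux

set_option maxHeartbeats 2000000 in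
open Stmt11Aux in
/-- Weighted `H¹` interpolation error estimate: for `u` twice
continuously differentiable on `[0,1] × [0,Θ]`,
`‖u − Πu‖²_{L²_r} + ‖∂_r(u − Πu)‖²_{L²_r} + ‖∂_θ(u − Πu)‖²_{L²_{1/r}}
  ≤ h²(h² + 4)(‖∂_{rθ} u‖²_{L²_r} + ‖∂_{θθ} u‖²_{L²_{1/r}})` in `[0,∞]`,
where `h = max_j (θ_{j+1} − θ_j)` and `∂_θ(u − Πu)(r,θ) = ∂_θ u(r,θ) − Σ_i u(r,θ_i) e_i′(θ)`
is defined for `θ` outside the partition nodes. -/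
theorem stmt11 (Θ : ℝ) (hΘ₀ : 0 < Θ) (hΘ₂ : Θ < 2 * π)
    (N : ℕ) (hN : 2 ≤ N) (t : ℕ → ℝ) (e : ℕ → ℝ → ℝ)
    (ht0 : t 0 = 0) (htN : t (N - 1) = Θ)
    (htmono : ∀ j, j + 1 < N → t j < t (j + 1))
    (hnode : ∀ i < N, ∀ j < N, e i (t j) = if i = j then 1 else 0)
    (hlin : ∀ i < N, ∀ j, j + 1 < N → ∀ x ∈ Icc (t j) (t (j + 1)),
      e i x = e i (t j) + (e i (t (j + 1)) - e i (t j)) * (x - t j) / (t (j + 1) - t j))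
    (h : ℝ) (hmax : IsGreatest ((fun j => t (j + 1) - t j) '' {j : ℕ | j + 1 < N}) h)
    (u : ℝ × ℝ → ℝ) (hu : ContDiffOn ℝ 2 u (Icc (0:ℝ) 1 ×ˢ Icc (0:ℝ) Θ))
    (dε : ℝ × ℝ → ℝ)
    (hdε : ∀ p, dε p = pd2 u p - ∑ i ∈ Finset.range N, u (p.1, t i) * deriv (e i) p.2) :
    wL2r Θ (fun p => u p - interp N t e u p)
        + wL2r Θ (pd1 (fun p => u p - interp N t e u p))
        + wL2invr Θ dε
      ≤ ENNReal.ofReal (h ^ 2 * (h ^ 2 + 4)) *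
          (wL2r Θ (pd2 (pd1 u)) + wL2invr Θ (pd2 (pd2 u))) := by
  -- partition facts
  have hgap : ∀ j, j + 1 < N → t (j + 1) - t j ≤ h := fun j hj => hmax.2 ⟨j, hj, rfl⟩
  have hpos : 0 < h := by
    obtain ⟨j, hj, hjh⟩ := hmax.1
    rw [← hjh]; exact sub_pos.2 (htmono j hj)
  have htm := tmono htmono
  have htIcc : ∀ i, i < N → t i ∈ Icc (0:ℝ) Θ := by
    intro i hi
    constructor
    · rw [← ht0]; exact htm 0 i (Nat.zero_le _) hi
    · rw [← htN]; exact htm i (N - 1) (by omega) (by omega)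
  -- multivariable setup
  set S := Icc (0:ℝ) 1 ×ˢ Icc (0:ℝ) Θ with hS
  have hSu : UniqueDiffOn ℝ S := (uniqueDiffOn_Icc one_pos).prod (uniqueDiffOn_Icc hΘ₀)
  set w : ℝ × ℝ → ℝ := fun p => fderivWithin ℝ u S p (1, 0) with hwdef
  have hwc : ContDiffOn ℝ 1 w S := by
    have h1 : ContDiffOn ℝ 1 (fderivWithin ℝ u S) S := hu.fderivWithin hSu (by norm_num)
    exact (ContinuousLinearMap.apply ℝ ℝ ((1:ℝ), (0:ℝ))).contDiff.comp_contDiffOn h1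
  have hpd1H : ∀ r ∈ Ioo (0:ℝ) 1, ∀ θ ∈ Icc (0:ℝ) Θ,
      HasDerivAt (fun s => u (s, θ)) (w (r, θ)) r := by
    intro r hr θ hθ
    have hmem : (r, θ) ∈ S := ⟨Ioo_subset_Icc_self hr, hθ⟩
    have hdiff : DifferentiableWithinAt ℝ u S (r, θ) :=
      (hu.differentiableOn (by norm_num)) _ hmem
    have hF : HasFDerivWithinAt u (fderivWithin ℝ u S (r, θ)) S (r, θ) :=
      hdiff.hasFDerivWithinAt
    have hline : HasDerivWithinAt (fun s : ℝ => (s, θ)) ((1:ℝ), (0:ℝ)) (Ioo 0 1) r :=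
      (HasDerivAt.prodMk (hasDerivAt_id r) (hasDerivAt_const r θ)).hasDerivWithinAt
    have hmaps : MapsTo (fun s : ℝ => (s, θ)) (Ioo 0 1) S :=
      fun s hs => ⟨Ioo_subset_Icc_self hs, hθ⟩
    have h2 := hF.comp_hasDerivWithinAt r hline hmaps
    exact (h2.hasDerivAt (Ioo_mem_nhds hr.1 hr.2) : HasDerivAt (fun s => u (s, θ)) _ r)
  -- the per-radius inner inequalities
  have key : ∀ r ∈ Ioo (0:ℝ) 1,
      ((∫⁻ θ in Ioo (0:ℝ) Θ,
          ENNReal.ofReal ((u (r, θ) - interp N t e u (r, θ)) ^ 2 * r))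
        ≤ ENNReal.ofReal (h ^ 2 * h ^ 2) *
          ∫⁻ θ in Ioo (0:ℝ) Θ, ENNReal.ofReal ((pd2 (pd2 u) (r, θ)) ^ 2 / r))
      ∧ ((∫⁻ θ in Ioo (0:ℝ) Θ,
          ENNReal.ofReal ((pd1 (fun p => u p - interp N t e u p) (r, θ)) ^ 2 * r))
        ≤ ENNReal.ofReal (h ^ 2) *
          ∫⁻ θ in Ioo (0:ℝ) Θ, ENNReal.ofReal ((pd2 (pd1 u) (r, θ)) ^ 2 * r))
      ∧ ((∫⁻ θ in Ioo (0:ℝ) Θ, ENNReal.ofReal ((dε (r, θ)) ^ 2 / r))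
        ≤ ENNReal.ofReal (h ^ 2) *
          ∫⁻ θ in Ioo (0:ℝ) Θ, ENNReal.ofReal ((pd2 (pd2 u) (r, θ)) ^ 2 / r)) := by
    intro r hr
    have hr0 : 0 < r := hr.1
    have hr1 : r < 1 := hr.2
    have h1r : 1 ≤ 1 / r := by rw [le_div_iff₀ hr0]; linarith
    have hrinv : (0:ℝ) ≤ 1 / r := by positivity
    have hmaps2 : MapsTo (fun θ : ℝ => (r, θ)) (Icc (0:ℝ) Θ) S :=
      fun θ hθ => ⟨Ioo_subset_Icc_self hr, hθ⟩
    have hg : ContDiffOn ℝ 2 (fun θ => u (r, θ)) (Icc (0:ℝ) Θ) :=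
      hu.comp ((contDiff_const.prodMk contDiff_id).contDiffOn) hmaps2
    obtain ⟨hG1c, hgd⟩ := oneD_pack hΘ₀ (hg.of_le one_le_two)
    have hG1cd : ContDiffOn ℝ 1 (derivWithin (fun θ => u (r, θ)) (Icc (0:ℝ) Θ))
        (Icc (0:ℝ) Θ) := hg.derivWithin (uniqueDiffOn_Icc hΘ₀) (by norm_num)
    obtain ⟨hG2c, hG1d⟩ := oneD_pack hΘ₀ hG1cd
    set G1 := derivWithin (fun θ => u (r, θ)) (Icc (0:ℝ) Θ) with hG1def
    set G2 := derivWithin G1 (Icc (0:ℝ) Θ) with hG2def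
    have hvc : ContDiffOn ℝ 1 (fun θ => w (r, θ)) (Icc (0:ℝ) Θ) :=
      hwc.comp ((contDiff_const.prodMk contDiff_id).contDiffOn) hmaps2
    obtain ⟨hF1c, hvd⟩ := oneD_pack hΘ₀ hvc
    set v : ℝ → ℝ := fun θ => w (r, θ) with hvdef
    set F1 := derivWithin v (Icc (0:ℝ) Θ) with hF1def
    have hvpd1 : ∀ θ ∈ Icc (0:ℝ) Θ, pd1 u (r, θ) = v θ :=
      fun θ hθ => (hpd1H r hr θ hθ).deriv
    have hpd2pd2 : ∀ x ∈ Ioo (0:ℝ) Θ, pd2 (pd2 u) (r, x) = G2 x := by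
      intro x hx
      have h1 : (fun y => pd2 u (r, y)) =ᶠ[nhds x] G1 := by
        filter_upwards [Ioo_mem_nhds hx.1 hx.2] with y hy
        exact (hgd y hy).deriv
      calc pd2 (pd2 u) (r, x) = deriv (fun y => pd2 u (r, y)) x := rfl
        _ = deriv G1 x := h1.deriv_eq
        _ = G2 x := (hG1d x hx).deriv
    have hpd2pd1 : ∀ x ∈ Ioo (0:ℝ) Θ, pd2 (pd1 u) (r, x) = F1 x := by
      intro x hx
      have h1 : (fun y => pd1 u (r, y)) =ᶠ[nhds x] v := by
        filter_upwards [Ioo_mem_nhds hx.1 hx.2] with y hy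
        exact hvpd1 y (Ioo_subset_Icc_self hy)
      calc pd2 (pd1 u) (r, x) = deriv (fun y => pd1 u (r, y)) x := rfl
        _ = deriv v x := h1.deriv_eq
        _ = F1 x := (hvd x hx).deriv
    -- per-subinterval inequalities (all three at once)
    have perj : ∀ j, j + 1 < N →
        ((∫⁻ x in Ioo (t j) (t (j + 1)),
            ENNReal.ofReal ((u (r, x) - interp N t e u (r, x)) ^ 2 * r))
          ≤ ENNReal.ofReal (h ^ 2 * h ^ 2) *
            ∫⁻ x in Ioo (t j) (t (j + 1)), ENNReal.ofReal ((pd2 (pd2 u) (r, x)) ^ 2 / r))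
        ∧ ((∫⁻ x in Ioo (t j) (t (j + 1)),
            ENNReal.ofReal ((pd1 (fun p => u p - interp N t e u p) (r, x)) ^ 2 * r))
          ≤ ENNReal.ofReal (h ^ 2) *
            ∫⁻ x in Ioo (t j) (t (j + 1)), ENNReal.ofReal ((pd2 (pd1 u) (r, x)) ^ 2 * r))
        ∧ ((∫⁻ x in Ioo (t j) (t (j + 1)), ENNReal.ofReal ((dε (r, x)) ^ 2 / r))
          ≤ ENNReal.ofReal (h ^ 2) *
            ∫⁻ x in Ioo (t j) (t (j + 1)), ENNReal.ofReal ((pd2 (pd2 u) (r, x)) ^ 2 / r)) := by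
      intro j hj1
      have hab : t j < t (j + 1) := htmono j hj1
      have haI : t j ∈ Icc (0:ℝ) Θ := htIcc j (by omega)
      have hbI : t (j + 1) ∈ Icc (0:ℝ) Θ := htIcc (j + 1) hj1
      have hsub : Icc (t j) (t (j + 1)) ⊆ Icc (0:ℝ) Θ := Icc_subset_Icc haI.1 hbI.2
      have hIoo : Ioo (t j) (t (j + 1)) ⊆ Ioo (0:ℝ) Θ :=
        fun x hx => ⟨lt_of_le_of_lt haI.1 hx.1, lt_of_lt_of_le hx.2 hbI.2⟩
      have hba : t (j + 1) - t j ≤ h := hgap j hj1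
      have hbapos : 0 < t (j + 1) - t j := sub_pos.2 hab
      have hb2 : (t (j + 1) - t j) ^ 2 ≤ h ^ 2 := by nlinarith
      -- continuity restrictions
      have hgC : ContinuousOn (fun θ => u (r, θ)) (Icc (t j) (t (j + 1))) :=
        (hg.continuousOn).mono hsub
      have hG1C : ContinuousOn G1 (Icc (t j) (t (j + 1))) := hG1c.mono hsub
      have hG2C : ContinuousOn G2 (Icc (t j) (t (j + 1))) := hG2c.mono hsub
      have hvC : ContinuousOn v (Icc (t j) (t (j + 1))) := (hvc.continuousOn).mono hsub
      have hF1C : ContinuousOn F1 (Icc (t j) (t (j + 1))) := hF1c.mono hsub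
      -- FTC identities for slopes
      have hFTCg : ∫ s in (t j)..(t (j + 1)), G1 s = u (r, t (j + 1)) - u (r, t j) := by
        apply intervalIntegral.integral_eq_sub_of_hasDerivAt_of_le hab.le hgC
          (fun x hx => hgd x (hIoo hx))
        exact ContinuousOn.intervalIntegrable (by rw [uIcc_of_le hab.le]; exact hG1C)
      have hFTCv : ∫ s in (t j)..(t (j + 1)), F1 s = v (t (j + 1)) - v (t j) := by
        apply intervalIntegral.integral_eq_sub_of_hasDerivAt_of_le hab.le hvC
          (fun x hx => hvd x (hIoo hx))
        exact ContinuousOn.intervalIntegrable (by rw [uIcc_of_le hab.le]; exact hF1C)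
      -- nonnegativity of the various integrals
      have hG2nn : (0:ℝ) ≤ ∫ s in (t j)..(t (j + 1)), G2 s ^ 2 :=
        intervalIntegral.integral_nonneg hab.le (fun s _ => sq_nonneg _)
      have hF1nn : (0:ℝ) ≤ ∫ s in (t j)..(t (j + 1)), F1 s ^ 2 :=
        intervalIntegral.integral_nonneg hab.le (fun s _ => sq_nonneg _)
      -- error function for u
      have hψgC : ContinuousOn
          (fun s => G1 s - (u (r, t (j + 1)) - u (r, t j)) / (t (j + 1) - t j))
          (Icc (t j) (t (j + 1))) := hG1C.sub continuousOn_const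
      have haffc : Continuous (fun s : ℝ =>
          u (r, t j) + (u (r, t (j + 1)) - u (r, t j)) * (s - t j) / (t (j + 1) - t j)) := by
        exact continuous_const.add
          (((continuous_const.mul (continuous_id.sub continuous_const)).div_const _))
      have hφgC : ContinuousOn (fun s => u (r, s) -
          (u (r, t j) + (u (r, t (j + 1)) - u (r, t j)) * (s - t j) / (t (j + 1) - t j)))
          (Icc (t j) (t (j + 1))) := hgC.sub haffc.continuousOn
      have hφgd : ∀ x ∈ Ioo (t j) (t (j + 1)), HasDerivAt (fun s => u (r, s) -
          (u (r, t j) + (u (r, t (j + 1)) - u (r, t j)) * (s - t j) / (t (j + 1) - t j)))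
          (G1 x - (u (r, t (j + 1)) - u (r, t j)) / (t (j + 1) - t j)) x :=
        fun x hx => (hgd x (hIoo hx)).sub (affine_hasDerivAt _ _ _ _ x)
      have hφga : u (r, t j) -
          (u (r, t j) + (u (r, t (j + 1)) - u (r, t j)) * (t j - t j) / (t (j + 1) - t j))
          = 0 := by ring
      -- pointwise and integrated bounds (g-part)
      have E3p := key3 hab G1 G2 hG1C hG2C (fun x hx => hG1d x (hIoo hx))
      have hE3int : ∫ s in (t j)..(t (j + 1)),
          (G1 s - (u (r, t (j + 1)) - u (r, t j)) / (t (j + 1) - t j)) ^ 2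
          ≤ (t (j + 1) - t j) * ((t (j + 1) - t j) *
            ∫ s in (t j)..(t (j + 1)), G2 s ^ 2) := by
        apply int_sq_le hab.le _ hψgC
        intro x hx
        have := E3p x hx
        rw [hFTCg] at this
        exact this
      have hψgnn : (0:ℝ) ≤ ∫ s in (t j)..(t (j + 1)),
          (G1 s - (u (r, t (j + 1)) - u (r, t j)) / (t (j + 1) - t j)) ^ 2 :=
        intervalIntegral.integral_nonneg hab.le (fun s _ => sq_nonneg _)
      have E1p := key1 hab.le _ _ hφgC hφga hψgC hφgd
      have hE1int : ∫ s in (t j)..(t (j + 1)), (u (r, s) -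
          (u (r, t j) + (u (r, t (j + 1)) - u (r, t j)) * (s - t j) / (t (j + 1) - t j))) ^ 2
          ≤ (t (j + 1) - t j) * ((t (j + 1) - t j) * ∫ s in (t j)..(t (j + 1)),
            (G1 s - (u (r, t (j + 1)) - u (r, t j)) / (t (j + 1) - t j)) ^ 2) :=
        int_sq_le hab.le _ hφgC E1p
      have s2 : ∫ s in (t j)..(t (j + 1)),
          (G1 s - (u (r, t (j + 1)) - u (r, t j)) / (t (j + 1) - t j)) ^ 2
          ≤ h ^ 2 * ∫ s in (t j)..(t (j + 1)), G2 s ^ 2 := by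
        nlinarith [hE3int, mul_nonneg (sub_nonneg.2 hb2) hG2nn]
      have s1 : ∫ s in (t j)..(t (j + 1)), (u (r, s) -
          (u (r, t j) + (u (r, t (j + 1)) - u (r, t j)) * (s - t j) / (t (j + 1) - t j))) ^ 2
          ≤ h ^ 2 * ∫ s in (t j)..(t (j + 1)),
            (G1 s - (u (r, t (j + 1)) - u (r, t j)) / (t (j + 1) - t j)) ^ 2 := by
        nlinarith [hE1int, mul_nonneg (sub_nonneg.2 hb2) hψgnn]
      have hφgnn : (0:ℝ) ≤ ∫ s in (t j)..(t (j + 1)), (u (r, s) -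
          (u (r, t j) + (u (r, t (j + 1)) - u (r, t j)) * (s - t j) / (t (j + 1) - t j))) ^ 2 :=
        intervalIntegral.integral_nonneg hab.le (fun s _ => sq_nonneg _)
      have s3 : ∫ s in (t j)..(t (j + 1)), (u (r, s) -
          (u (r, t j) + (u (r, t (j + 1)) - u (r, t j)) * (s - t j) / (t (j + 1) - t j))) ^ 2
          ≤ h ^ 2 * (h ^ 2 * ∫ s in (t j)..(t (j + 1)), G2 s ^ 2) :=
        s1.trans (mul_le_mul_of_nonneg_left s2 (sq_nonneg h))
      -- error function for v
      have hψvC : ContinuousOn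
          (fun s => F1 s - (v (t (j + 1)) - v (t j)) / (t (j + 1) - t j))
          (Icc (t j) (t (j + 1))) := hF1C.sub continuousOn_const
      have haffvc : Continuous (fun s : ℝ =>
          v (t j) + (v (t (j + 1)) - v (t j)) * (s - t j) / (t (j + 1) - t j)) :=
        continuous_const.add
          (((continuous_const.mul (continuous_id.sub continuous_const)).div_const _))
      have hφvC : ContinuousOn (fun s => v s -
          (v (t j) + (v (t (j + 1)) - v (t j)) * (s - t j) / (t (j + 1) - t j)))
          (Icc (t j) (t (j + 1))) := hvC.sub haffvc.continuousOn
      have hφvd : ∀ x ∈ Ioo (t j) (t (j + 1)), HasDerivAt (fun s => v s -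
          (v (t j) + (v (t (j + 1)) - v (t j)) * (s - t j) / (t (j + 1) - t j)))
          (F1 x - (v (t (j + 1)) - v (t j)) / (t (j + 1) - t j)) x :=
        fun x hx => (hvd x (hIoo hx)).sub (affine_hasDerivAt _ _ _ _ x)
      have hφva : v (t j) -
          (v (t j) + (v (t (j + 1)) - v (t j)) * (t j - t j) / (t (j + 1) - t j)) = 0 := by
        ring
      have sB2 : ∫ s in (t j)..(t (j + 1)),
          (F1 s - (v (t (j + 1)) - v (t j)) / (t (j + 1) - t j)) ^ 2
          ≤ ∫ s in (t j)..(t (j + 1)), F1 s ^ 2 := by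
        have := key2 hab F1 hF1C
        rw [hFTCv] at this
        exact this
      have hψvnn : (0:ℝ) ≤ ∫ s in (t j)..(t (j + 1)),
          (F1 s - (v (t (j + 1)) - v (t j)) / (t (j + 1) - t j)) ^ 2 :=
        intervalIntegral.integral_nonneg hab.le (fun s _ => sq_nonneg _)
      have EB1p := key1 hab.le _ _ hφvC hφva hψvC hφvd
      have hEB1int : ∫ s in (t j)..(t (j + 1)), (v s -
          (v (t j) + (v (t (j + 1)) - v (t j)) * (s - t j) / (t (j + 1) - t j))) ^ 2
          ≤ (t (j + 1) - t j) * ((t (j + 1) - t j) * ∫ s in (t j)..(t (j + 1)),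
            (F1 s - (v (t (j + 1)) - v (t j)) / (t (j + 1) - t j)) ^ 2) :=
        int_sq_le hab.le _ hφvC EB1p
      have sB1 : ∫ s in (t j)..(t (j + 1)), (v s -
          (v (t j) + (v (t (j + 1)) - v (t j)) * (s - t j) / (t (j + 1) - t j))) ^ 2
          ≤ h ^ 2 * ∫ s in (t j)..(t (j + 1)),
            (F1 s - (v (t (j + 1)) - v (t j)) / (t (j + 1) - t j)) ^ 2 := by
        nlinarith [hEB1int, mul_nonneg (sub_nonneg.2 hb2) hψvnn]
      have sB3 : ∫ s in (t j)..(t (j + 1)), (v s -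
          (v (t j) + (v (t (j + 1)) - v (t j)) * (s - t j) / (t (j + 1) - t j))) ^ 2
          ≤ h ^ 2 * ∫ s in (t j)..(t (j + 1)), F1 s ^ 2 :=
        sB1.trans (mul_le_mul_of_nonneg_left sB2 (sq_nonneg h))
      have hφvnn : (0:ℝ) ≤ ∫ s in (t j)..(t (j + 1)), (v s -
          (v (t j) + (v (t (j + 1)) - v (t j)) * (s - t j) / (t (j + 1) - t j))) ^ 2 :=
        intervalIntegral.integral_nonneg hab.le (fun s _ => sq_nonneg _)
      -- identification of the three error integrands
      have hinterp_eq : ∀ x ∈ Ioo (t j) (t (j + 1)),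
          u (r, x) - interp N t e u (r, x) = u (r, x) -
          (u (r, t j) + (u (r, t (j + 1)) - u (r, t j)) * (x - t j) / (t (j + 1) - t j)) := by
        intro x hx
        have := sum_affine hnode hlin j hj1 (fun i => u (r, t i)) x (Ioo_subset_Icc_self hx)
        have hi : interp N t e u (r, x) = ∑ i ∈ Finset.range N, u (r, t i) * e i x := rfl
        rw [hi, this]
      have hpd1err : ∀ x ∈ Ioo (t j) (t (j + 1)),
          pd1 (fun p => u p - interp N t e u p) (r, x) = v x -
          (v (t j) + (v (t (j + 1)) - v (t j)) * (x - t j) / (t (j + 1) - t j)) := by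
        intro x hx
        have hxI : x ∈ Icc (0:ℝ) Θ := hsub (Ioo_subset_Icc_self hx)
        have hsum : HasDerivAt (fun s => ∑ i ∈ Finset.range N, u (s, t i) * e i x)
            (∑ i ∈ Finset.range N, v (t i) * e i x) r := by
          apply HasDerivAt.fun_sum
          intro i hi
          exact (hpd1H r hr (t i) (htIcc i (Finset.mem_range.1 hi))).mul_const (e i x)
        have hder : HasDerivAt (fun s => u (s, x) - interp N t e u (s, x))
            (v x - ∑ i ∈ Finset.range N, v (t i) * e i x) r :=
          HasDerivAt.sub (hpd1H r hr x hxI) hsum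
        have h0 : pd1 (fun p => u p - interp N t e u p) (r, x)
            = v x - ∑ i ∈ Finset.range N, v (t i) * e i x := hder.deriv
        rw [h0, sum_affine hnode hlin j hj1 (fun i => v (t i)) x (Ioo_subset_Icc_self hx)]
      have hdε_eq : ∀ x ∈ Ioo (t j) (t (j + 1)),
          dε (r, x) = G1 x - (u (r, t (j + 1)) - u (r, t j)) / (t (j + 1) - t j) := by
        intro x hx
        rw [hdε (r, x)]
        have hs := sum_affine_deriv hnode hlin j hj1 (fun i => u (r, t i)) x hx
        have hp2 : pd2 u (r, x) = G1 x := (hgd x (hIoo hx)).deriv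
        rw [hp2]
        have hSS : ∑ i ∈ Finset.range N, u ((r, x).1, t i) * deriv (e i) (r, x).2
            = (u (r, t (j + 1)) - u (r, t j)) / (t (j + 1) - t j) := hs
        rw [hSS]
      -- final three lintegral inequalities
      refine ⟨?_, ?_, ?_⟩
      · -- A
        have hL := lint_ofReal_sq hab.le r hr0.le
          (fun x => u (r, x) - interp N t e u (r, x))
          (fun s => u (r, s) -
            (u (r, t j) + (u (r, t (j + 1)) - u (r, t j)) * (s - t j) / (t (j + 1) - t j)))
          hinterp_eq hφgC
        have hR := lint_ofReal_sq hab.le (1 / r) hrinv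
          (fun x => pd2 (pd2 u) (r, x)) G2 (fun x hx => hpd2pd2 x (hIoo hx)) hG2C
        have hdiv : ∀ x : ℝ, (pd2 (pd2 u) (r, x)) ^ 2 / r
            = (pd2 (pd2 u) (r, x)) ^ 2 * (1 / r) := fun x => by ring
        calc ∫⁻ x in Ioo (t j) (t (j + 1)),
              ENNReal.ofReal ((u (r, x) - interp N t e u (r, x)) ^ 2 * r)
            = ENNReal.ofReal (r * ∫ s in (t j)..(t (j + 1)), (u (r, s) -
                (u (r, t j) + (u (r, t (j + 1)) - u (r, t j)) * (s - t j)
                  / (t (j + 1) - t j))) ^ 2) := hL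
          _ ≤ ENNReal.ofReal ((h ^ 2 * h ^ 2) *
                ((1 / r) * ∫ s in (t j)..(t (j + 1)), G2 s ^ 2)) := by
              apply ENNReal.ofReal_le_ofReal
              have t1 : r * (∫ s in (t j)..(t (j + 1)), (u (r, s) -
                  (u (r, t j) + (u (r, t (j + 1)) - u (r, t j)) * (s - t j)
                    / (t (j + 1) - t j))) ^ 2)
                  ≤ ∫ s in (t j)..(t (j + 1)), (u (r, s) -
                  (u (r, t j) + (u (r, t (j + 1)) - u (r, t j)) * (s - t j)
                    / (t (j + 1) - t j))) ^ 2 := by nlinarith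
              have t2 : h ^ 2 * (h ^ 2 * ∫ s in (t j)..(t (j + 1)), G2 s ^ 2)
                  ≤ (h ^ 2 * h ^ 2) * ((1 / r) * ∫ s in (t j)..(t (j + 1)), G2 s ^ 2) := by
                nlinarith [mul_nonneg (mul_nonneg (sq_nonneg h) (sq_nonneg h)) hG2nn]
              linarith [s3]
          _ = ENNReal.ofReal (h ^ 2 * h ^ 2) *
                ENNReal.ofReal ((1 / r) * ∫ s in (t j)..(t (j + 1)), G2 s ^ 2) := by
              rw [ENNReal.ofReal_mul (by positivity)]
          _ = ENNReal.ofReal (h ^ 2 * h ^ 2) *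
                ∫⁻ x in Ioo (t j) (t (j + 1)),
                  ENNReal.ofReal ((pd2 (pd2 u) (r, x)) ^ 2 / r) := by
              rw [show (∫⁻ x in Ioo (t j) (t (j + 1)),
                  ENNReal.ofReal ((pd2 (pd2 u) (r, x)) ^ 2 / r))
                = ∫⁻ x in Ioo (t j) (t (j + 1)),
                  ENNReal.ofReal ((pd2 (pd2 u) (r, x)) ^ 2 * (1 / r)) by
                  simp_rw [hdiv]]
              rw [hR]
      · -- B
        have hL := lint_ofReal_sq hab.le r hr0.le
          (fun x => pd1 (fun p => u p - interp N t e u p) (r, x))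
          (fun s => v s -
            (v (t j) + (v (t (j + 1)) - v (t j)) * (s - t j) / (t (j + 1) - t j)))
          hpd1err hφvC
        have hR := lint_ofReal_sq hab.le r hr0.le
          (fun x => pd2 (pd1 u) (r, x)) F1 (fun x hx => hpd2pd1 x (hIoo hx)) hF1C
        calc ∫⁻ x in Ioo (t j) (t (j + 1)),
              ENNReal.ofReal ((pd1 (fun p => u p - interp N t e u p) (r, x)) ^ 2 * r)
            = ENNReal.ofReal (r * ∫ s in (t j)..(t (j + 1)), (v s -
                (v (t j) + (v (t (j + 1)) - v (t j)) * (s - t j)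
                  / (t (j + 1) - t j))) ^ 2) := hL
          _ ≤ ENNReal.ofReal (h ^ 2 *
                (r * ∫ s in (t j)..(t (j + 1)), F1 s ^ 2)) := by
              apply ENNReal.ofReal_le_ofReal
              nlinarith [mul_le_mul_of_nonneg_left sB3 hr0.le]
          _ = ENNReal.ofReal (h ^ 2) *
                ENNReal.ofReal (r * ∫ s in (t j)..(t (j + 1)), F1 s ^ 2) := by
              rw [ENNReal.ofReal_mul (by positivity)]
          _ = ENNReal.ofReal (h ^ 2) *
                ∫⁻ x in Ioo (t j) (t (j + 1)),
                  ENNReal.ofReal ((pd2 (pd1 u) (r, x)) ^ 2 * r) := by rw [hR]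
      · -- C
        have hL := lint_ofReal_sq hab.le (1 / r) hrinv
          (fun x => dε (r, x))
          (fun s => G1 s - (u (r, t (j + 1)) - u (r, t j)) / (t (j + 1) - t j))
          hdε_eq hψgC
        have hR := lint_ofReal_sq hab.le (1 / r) hrinv
          (fun x => pd2 (pd2 u) (r, x)) G2 (fun x hx => hpd2pd2 x (hIoo hx)) hG2C
        have hdiv : ∀ x : ℝ, (dε (r, x)) ^ 2 / r = (dε (r, x)) ^ 2 * (1 / r) :=
          fun x => by ring
        have hdiv2 : ∀ x : ℝ, (pd2 (pd2 u) (r, x)) ^ 2 / r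
            = (pd2 (pd2 u) (r, x)) ^ 2 * (1 / r) := fun x => by ring
        calc ∫⁻ x in Ioo (t j) (t (j + 1)), ENNReal.ofReal ((dε (r, x)) ^ 2 / r)
            = ∫⁻ x in Ioo (t j) (t (j + 1)),
                ENNReal.ofReal ((dε (r, x)) ^ 2 * (1 / r)) := by simp_rw [hdiv]
          _ = ENNReal.ofReal ((1 / r) * ∫ s in (t j)..(t (j + 1)), (G1 s -
                (u (r, t (j + 1)) - u (r, t j)) / (t (j + 1) - t j)) ^ 2) := hL
          _ ≤ ENNReal.ofReal (h ^ 2 *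
                ((1 / r) * ∫ s in (t j)..(t (j + 1)), G2 s ^ 2)) := by
              apply ENNReal.ofReal_le_ofReal
              nlinarith [mul_le_mul_of_nonneg_left s2 hrinv]
          _ = ENNReal.ofReal (h ^ 2) *
                ENNReal.ofReal ((1 / r) * ∫ s in (t j)..(t (j + 1)), G2 s ^ 2) := by
              rw [ENNReal.ofReal_mul (by positivity)]
          _ = ENNReal.ofReal (h ^ 2) *
                ∫⁻ x in Ioo (t j) (t (j + 1)),
                  ENNReal.ofReal ((pd2 (pd2 u) (r, x)) ^ 2 / r) := by
              rw [show (∫⁻ x in Ioo (t j) (t (j + 1)),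
                  ENNReal.ofReal ((pd2 (pd2 u) (r, x)) ^ 2 / r))
                = ∫⁻ x in Ioo (t j) (t (j + 1)),
                  ENNReal.ofReal ((pd2 (pd2 u) (r, x)) ^ 2 * (1 / r)) by
                  simp_rw [hdiv2]]
              rw [hR]
    exact ⟨split_le hN ht0 htN htmono _ _ _ (fun j hj => (perj j hj).1),
      split_le hN ht0 htN htmono _ _ _ (fun j hj => (perj j hj).2.1),
      split_le hN ht0 htN htmono _ _ _ (fun j hj => (perj j hj).2.2)⟩
  -- global assembly
  have hA : wL2r Θ (fun p => u p - interp N t e u p)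
      ≤ ENNReal.ofReal (h ^ 2 * h ^ 2) * wL2invr Θ (pd2 (pd2 u)) := by
    rw [wL2r, wL2invr, ← lintegral_const_mul' (ENNReal.ofReal (h ^ 2 * h ^ 2)) _
      ENNReal.ofReal_ne_top]
    refine lintegral_mono_ae ((ae_restrict_iff' measurableSet_Ioo).2
      (Filter.Eventually.of_forall fun r hr => ?_))
    exact (key r hr).1
  have hB : wL2r Θ (pd1 (fun p => u p - interp N t e u p))
      ≤ ENNReal.ofReal (h ^ 2) * wL2r Θ (pd2 (pd1 u)) := by
    rw [wL2r, wL2r, ← lintegral_const_mul' (ENNReal.ofReal (h ^ 2)) _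
      ENNReal.ofReal_ne_top]
    refine lintegral_mono_ae ((ae_restrict_iff' measurableSet_Ioo).2
      (Filter.Eventually.of_forall fun r hr => ?_))
    exact (key r hr).2.1
  have hC : wL2invr Θ dε
      ≤ ENNReal.ofReal (h ^ 2) * wL2invr Θ (pd2 (pd2 u)) := by
    rw [wL2invr, wL2invr, ← lintegral_const_mul' (ENNReal.ofReal (h ^ 2)) _
      ENNReal.ofReal_ne_top]
    refine lintegral_mono_ae ((ae_restrict_iff' measurableSet_Ioo).2
      (Filter.Eventually.of_forall fun r hr => ?_))
    exact (key r hr).2.2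
  have c1 : ENNReal.ofReal (h ^ 2 * h ^ 2) + ENNReal.ofReal (h ^ 2)
      ≤ ENNReal.ofReal (h ^ 2 * (h ^ 2 + 4)) := by
    rw [← ENNReal.ofReal_add (by positivity) (by positivity)]
    apply ENNReal.ofReal_le_ofReal
    nlinarith [sq_nonneg h]
  have c2 : ENNReal.ofReal (h ^ 2) ≤ ENNReal.ofReal (h ^ 2 * (h ^ 2 + 4)) := by
    apply ENNReal.ofReal_le_ofReal
    nlinarith [sq_nonneg h]
  calc wL2r Θ (fun p => u p - interp N t e u p)
        + wL2r Θ (pd1 (fun p => u p - interp N t e u p))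
        + wL2invr Θ dε
      ≤ (ENNReal.ofReal (h ^ 2 * h ^ 2) * wL2invr Θ (pd2 (pd2 u)))
        + (ENNReal.ofReal (h ^ 2) * wL2r Θ (pd2 (pd1 u)))
        + (ENNReal.ofReal (h ^ 2) * wL2invr Θ (pd2 (pd2 u))) :=
      add_le_add (add_le_add hA hB) hC
    _ = ENNReal.ofReal (h ^ 2) * wL2r Θ (pd2 (pd1 u))
        + (ENNReal.ofReal (h ^ 2 * h ^ 2) + ENNReal.ofReal (h ^ 2))
          * wL2invr Θ (pd2 (pd2 u)) := by ring
    _ ≤ ENNReal.ofReal (h ^ 2 * (h ^ 2 + 4)) * wL2r Θ (pd2 (pd1 u))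
        + ENNReal.ofReal (h ^ 2 * (h ^ 2 + 4)) * wL2invr Θ (pd2 (pd2 u)) :=
      add_le_add (mul_le_mul_left c2 _) (mul_le_mul_left c1 _)
    _ = ENNReal.ofReal (h ^ 2 * (h ^ 2 + 4)) *
        (wL2r Θ (pd2 (pd1 u)) + wL2invr Θ (pd2 (pd2 u))) := (mul_add _ _ _).symm
end

section
/- Assume in addition that A is symmetric positive definite and B is symmetric positive semidefinite. Then every eigenvalue λ ∈ ℂ of (the complexification of) the block matrix E is real. -/
open Matrix
open scoped ComplexOrder

/-- Complexification of a real positive semidefinite matrix is positive semidefinite. -/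
lemma psd_map_complex {n : ℕ} {M : Matrix (Fin n) (Fin n) ℝ} (hM : M.PosSemidef) :
    (M.map (Complex.ofReal ·)).PosSemidef := by
  obtain ⟨C, rfl⟩ : ∃ C : Matrix (Fin n) (Fin n) ℝ, M = Cᴴ * C := by
    open scoped MatrixOrder in
    exact ⟨CFC.sqrt M, by
      rw [← star_eq_conjTranspose, (CFC.sqrt_nonneg M).isSelfAdjoint.star_eq, CFC.sqrt_mul_sqrt_self M hM.nonneg]⟩
  have hmap : (Cᴴ * C).map (Complex.ofReal ·)
      = (C.map (Complex.ofReal ·))ᴴ * (C.map (Complex.ofReal ·)) := by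
    ext i j
    simp [Matrix.mul_apply, Matrix.conjTranspose_apply, Complex.conj_ofReal]
  rw [hmap]
  exact Matrix.posSemidef_conjTranspose_mul_self _

/-- If `A` is symmetric positive definite and `B` is symmetric
positive semidefinite, then every eigenvalue `λ ∈ ℂ` of (the complexification of)
the block matrix `E = [[0, A⁻¹],[B, 0]]` is real. -/
theorem stmt14 (N : ℕ) (hN : 1 ≤ N)
    (A B : Matrix (Fin N) (Fin N) ℝ) (hA : IsUnit A.det)
    (hApd : A.PosDef) (hBpsd : B.PosSemidef)
    (lam : ℂ)
    (hlam : lam ∈ spectrum ℂ ((Matrix.fromBlocks 0 A⁻¹ B 0).map (Complex.ofReal ·))) :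
    lam.im = 0 := by
  classical
  set f : ℝ → ℂ := (Complex.ofReal ·) with hf
  -- complexified matrices
  set Ac := A.map f with hAc
  set Ainvc := A⁻¹.map f with hAinvc
  set Bc := B.map f with hBc
  have hmul : ∀ (M M' : Matrix (Fin N) (Fin N) ℝ),
      (M * M').map f = M.map f * M'.map f := by
    intro M M'
    ext i j
    simp [Matrix.mul_apply, hf]
  have hACinv : Ac * Ainvc = 1 := by
    rw [hAc, hAinvc, ← hmul, Matrix.mul_nonsing_inv A hA]
    ext i j
    simp [Matrix.one_apply, hf]
    split <;> simp
  have hAinvC : Ainvc * Ac = 1 := by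
    rw [hAc, hAinvc, ← hmul, Matrix.nonsing_inv_mul A hA]
    ext i j
    simp [Matrix.one_apply, hf]
    split <;> simp
  -- extract an eigenvector
  rw [← AlgEquiv.spectrum_eq
      (Matrix.toLinAlgEquiv' : Matrix (Fin N ⊕ Fin N) (Fin N ⊕ Fin N) ℂ ≃ₐ[ℂ] _),
    ← Module.End.hasEigenvalue_iff_mem_spectrum] at hlam
  obtain ⟨v, hv⟩ := hlam.exists_hasEigenvector
  have hveq : (Matrix.fromBlocks 0 A⁻¹ B 0).map f *ᵥ v = lam • v := by
    have := hv.apply_eq_smul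
    rwa [Matrix.toLinAlgEquiv'_apply] at this
  have hvne : v ≠ 0 := hv.right
  set φ : Fin N → ℂ := v ∘ Sum.inl with hφ
  set ψ : Fin N → ℂ := v ∘ Sum.inr with hψ
  rw [Matrix.fromBlocks_map, Matrix.fromBlocks_mulVec] at hveq
  have hz : (0 : Matrix (Fin N) (Fin N) ℝ).map f = 0 :=
    Matrix.map_zero f (by simp [hf])
  have h1 : Ainvc *ᵥ ψ = lam • φ := by
    funext i
    have := congrFun hveq (Sum.inl i)
    simpa [hφ, hψ, hAinvc, hz] using this
  have h2 : Bc *ᵥ φ = lam • ψ := by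
    funext i
    have := congrFun hveq (Sum.inr i)
    simpa [hφ, hψ, hBc, hz] using this
  -- ψ = lam • (Ac *ᵥ φ)
  have hpsi : ψ = lam • (Ac *ᵥ φ) := by
    have h := congrArg (fun w => Ac *ᵥ w) h1
    simpa [Matrix.mulVec_mulVec, hACinv, Matrix.mulVec_smul, Matrix.one_mulVec] using h
  -- φ ≠ 0
  have hφne : φ ≠ 0 := by
    intro h0
    apply hvne
    have hψ0 : ψ = 0 := by rw [hpsi, h0]; simp
    funext x
    cases x with
    | inl i => exact congrFun h0 i
    | inr i => exact congrFun hψ0 i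
  -- key scalar equation
  have hkey : star φ ⬝ᵥ (Bc *ᵥ φ) = lam ^ 2 * (star φ ⬝ᵥ (Ac *ᵥ φ)) := by
    rw [h2, hpsi]
    simp [Matrix.mulVec_smul, smul_eq_mul]
    ring
  set a := star φ ⬝ᵥ (Ac *ᵥ φ) with ha
  set b := star φ ⬝ᵥ (Bc *ᵥ φ) with hb
  have hAcpsd : Ac.PosSemidef := psd_map_complex hApd.posSemidef
  have hBcpsd : Bc.PosSemidef := psd_map_complex hBpsd
  have hage : 0 ≤ a := hAcpsd.dotProduct_mulVec_nonneg φ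
  have hbge : 0 ≤ b := hBcpsd.dotProduct_mulVec_nonneg φ
  have hane : a ≠ 0 := by
    intro h0
    apply hφne
    have hAφ : Ac *ᵥ φ = 0 := (hAcpsd.dotProduct_mulVec_zero_iff φ).mp h0
    have h : Ainvc *ᵥ (Ac *ᵥ φ) = φ := by
      rw [Matrix.mulVec_mulVec, hAinvC, Matrix.one_mulVec]
    rw [hAφ, Matrix.mulVec_zero] at h
    exact h.symm
  -- real/imag bookkeeping
  have haim : a.im = 0 := by
    have h := Complex.le_def.mp hage
    simpa using h.2.symm
  have hare : 0 < a.re := by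
    have h1' : 0 ≤ a.re := by simpa using (Complex.le_def.mp hage).1
    rcases lt_or_eq_of_le h1' with h | h
    · exact h
    · exact absurd (Complex.ext (by simpa using h.symm) haim) hane
  have hbim : b.im = 0 := by
    have h := Complex.le_def.mp hbge
    simpa using h.2.symm
  have hbre : 0 ≤ b.re := by simpa using (Complex.le_def.mp hbge).1
  -- lam^2 is real and nonnegative
  have him : (lam ^ 2).im = 0 := by
    have h := congrArg Complex.im hkey
    rw [Complex.mul_im, haim, hbim] at h
    simp at h
    rcases h with h' | h'
    · exact h'
    · exact absurd h' hare.ne'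
  have hre : 0 ≤ (lam ^ 2).re := by
    have h := congrArg Complex.re hkey
    rw [Complex.mul_re, haim] at h
    have h2' : b.re = (lam ^ 2).re * a.re := by simpa using h
    nlinarith
  -- conclude
  have hsqim : (lam ^ 2).im = 2 * lam.re * lam.im := by
    rw [pow_two, Complex.mul_im]; ring
  have hsqre : (lam ^ 2).re = lam.re ^ 2 - lam.im ^ 2 := by
    rw [pow_two, Complex.mul_re]; ring
  have hpq : lam.re * lam.im = 0 := by
    have := hsqim ▸ him
    linarith
  rcases mul_eq_zero.mp hpq with hp | hq
  · have hq2 : lam.im ^ 2 = 0 := by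
      have : 0 ≤ lam.re ^ 2 - lam.im ^ 2 := by rw [← hsqre]; exact hre
      nlinarith [sq_nonneg lam.im]
    exact pow_eq_zero_iff (by norm_num) |>.mp hq2
  · exact hq
end
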